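/- Let (M,g) be a perfect fluid space-time of dimension n ≥ 4 with R_{kl} = A g_{kl} + B u_k u_l, admitting a timelike vector X proportional to u with ∇_k X_l = ρ g_{kl}. Then the Weyl tensor annihilates X: C_{jklm} X^m = 0, hence C_{jkl}{}^m u_m = 0. -/
import Mathlib


/-- The Weyl tensor C_{jklm} of a perfect fluid space-time, with
R_{kl} = A g_{kl} + B u_k u_l and R = nA - B substituted into the defining formula
C_{jklm} = R_{jklm} + (1/(n-2))(g_{jm}R_{kl} - g_{km}R_{jl} + R_{jm}g_{kl} - R_{km}g_{jl})
           - (R/((n-1)(n-2)))(g_{jm}g_{kl} - g_{mk}g_{jl}). -/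
noncomputable def weylPF (n : ℕ) {M : Type*}
    (g : M → Fin n → Fin n → ℝ)
    (Riem : M → Fin n → Fin n → Fin n → Fin n → ℝ)
    (A B : M → ℝ) (u : M → Fin n → ℝ)
    (x : M) (j k l m : Fin n) : ℝ :=
  Riem x j k l m
  + (1/((n:ℝ) - 2)) *
      (g x j m * (A x * g x k l + B x * u x k * u x l)
        - g x k m * (A x * g x j l + B x * u x j * u x l)
        + (A x * g x j m + B x * u x j * u x m) * g x k l
        - (A x * g x k m + B x * u x k * u x m) * g x j l)
  - (((n:ℝ) * A x - B x) / (((n:ℝ) - 1) * ((n:ℝ) - 2)))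
      * (g x j m * g x k l - g x m k * g x j l)

/-!
STATEMENT 9.  Perfect fluid space-time of dimension n ≥ 4 admitting a timelike
vector X proportional to u with ∇_k X_l = ρ g_{kl}.  Then the Weyl tensor
annihilates X: C_{jklm} X^m = 0, hence C_{jkl}{}^m u_m = 0.
The identity R_{jklm}X^m = ((A-B)/(1-n))(X_j g_{kl} - X_k g_{jl}) (cf. statement 8)
is used as hypothesis.
-/
theorem perfectFluid_weyl_annihilates_X
    (n : ℕ) (hn : 4 ≤ n) (M : Type*)
    (g ginv : M → Fin n → Fin n → ℝ)
    (Riem : M → Fin n → Fin n → Fin n → Fin n → ℝ)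
    (A B : M → ℝ) (u : M → Fin n → ℝ)
    (X : M → Fin n → ℝ) (DX : M → Fin n → Fin n → ℝ)
    (ρ : M → ℝ) (Dρ : M → Fin n → ℝ)
    (hg : ∀ x i j, g x i j = g x j i)
    (hginv : ∀ x i j, ∑ m, ginv x i m * g x m j = if i = j then (1:ℝ) else 0)
    (hginvsymm : ∀ x i j, ginv x i j = ginv x j i)
    -- u is a unit timelike vector field: u^j u_j = -1
    (hunit : ∀ x, ∑ i, ∑ j, ginv x i j * u x i * u x j = -1)
    -- X is proportional to u and timelike
    (hXu : ∀ x, ∃ c : ℝ, ∀ j, X x j = c * u x j)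
    (hXtime : ∀ x, ∑ i, ∑ j, ginv x i j * X x i * X x j < 0)
    -- hypothesis: ∇_k X_l = ρ g_{kl}
    (hDX : ∀ x k l, DX x k l = ρ x * g x k l)
    -- identity R_{jklm}X^m = ((A-B)/(1-n))(X_j g_{kl} - X_k g_{jl})
    (hRiemX : ∀ x j k l, ∑ m, ∑ a, Riem x j k l a * ginv x a m * X x m
        = ((A x - B x) / (1 - (n:ℝ))) * (X x j * g x k l - X x k * g x j l))
    -- Dρ is determined as in statement 8
    (hDρ : ∀ x j, Dρ x j = ((A x - B x) / (1 - (n:ℝ))) * X x j) :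
    -- conclusions: C_{jklm}X^m = 0 and C_{jkl}{}^m u_m = 0
    (∀ x j k l, ∑ m, ∑ a, weylPF n g Riem A B u x j k l a * ginv x a m * X x m = 0)
    ∧ (∀ x j k l, ∑ m, ∑ a, ginv x m a * weylPF n g Riem A B u x j k l a * u x m = 0) := by

  have h1 : (1:ℝ) - (n:ℝ) ≠ 0 := by
    have : (4:ℝ) ≤ (n:ℝ) := by exact_mod_cast hn
    intro h; nlinarith
  have h2 : (n:ℝ) - 1 ≠ 0 := by
    have : (4:ℝ) ≤ (n:ℝ) := by exact_mod_cast hn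
    intro h; nlinarith
  have h3 : (n:ℝ) - 2 ≠ 0 := by
    have : (4:ℝ) ≤ (n:ℝ) := by exact_mod_cast hn
    intro h; nlinarith
  have first : ∀ x j k l,
      ∑ m, ∑ a, weylPF n g Riem A B u x j k l a * ginv x a m * X x m = 0 := by
    intro x j k l
    obtain ⟨c, hc⟩ := hXu x
    -- lowering/raising lemma
    have L1 : ∀ i, (∑ m, ∑ a, g x i a * ginv x a m * X x m) = X x i := by
      intro i
      have key : ∀ m, (∑ a, g x i a * ginv x a m * X x m)
          = (if m = i then (1:ℝ) else 0) * X x m := by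
        intro m
        rw [← Finset.sum_mul, ← hginv x m i]
        congr 1
        apply Finset.sum_congr rfl
        intro a _
        rw [hg x i a, hginvsymm x a m]
        ring
      simp [key]
    have L2 : (∑ m, ∑ a, u x a * ginv x a m * X x m) = -c := by
      have e1 : (∑ m, ∑ a, u x a * ginv x a m * X x m)
          = ∑ a, ∑ m, c * (ginv x a m * u x a * u x m) := by
        rw [Finset.sum_comm]
        apply Finset.sum_congr rfl; intro a _
        apply Finset.sum_congr rfl; intro m _
        rw [hc m]; ring
      rw [e1]
      have e2 : (∑ a, ∑ m, c * (ginv x a m * u x a * u x m))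
          = c * ∑ a, ∑ m, ginv x a m * u x a * u x m := by
        rw [Finset.mul_sum]
        apply Finset.sum_congr rfl; intro a _
        rw [Finset.mul_sum]
      rw [e2, hunit x]; ring
    set P : ℝ := (1/((n:ℝ)-2)) * (2*A x * g x k l + B x * u x k * u x l)
        - (((n:ℝ)*A x - B x)/(((n:ℝ)-1)*((n:ℝ)-2))) * g x k l with hP
    set Q : ℝ := -(1/((n:ℝ)-2)) * (2*A x * g x j l + B x * u x j * u x l)
        + (((n:ℝ)*A x - B x)/(((n:ℝ)-1)*((n:ℝ)-2))) * g x j l with hQ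
    set S : ℝ := (1/((n:ℝ)-2)) * (B x * u x j * g x k l - B x * u x k * g x j l) with hS
    have hexp : ∀ a, weylPF n g Riem A B u x j k l a
        = Riem x j k l a + P * g x j a + Q * g x k a + S * u x a := by
      intro a
      simp only [weylPF, hP, hQ, hS]
      rw [hg x a k]
      ring
    have split : (∑ m, ∑ a, weylPF n g Riem A B u x j k l a * ginv x a m * X x m)
        = (∑ m, ∑ a, Riem x j k l a * ginv x a m * X x m)
          + P * (∑ m, ∑ a, g x j a * ginv x a m * X x m)
          + Q * (∑ m, ∑ a, g x k a * ginv x a m * X x m)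
          + S * (∑ m, ∑ a, u x a * ginv x a m * X x m) := by
      simp only [Finset.mul_sum, ← Finset.sum_add_distrib]
      apply Finset.sum_congr rfl; intro m _
      apply Finset.sum_congr rfl; intro a _
      rw [hexp a]; ring
    rw [split, hRiemX x j k l, L1 j, L1 k, L2, hc j, hc k, hP, hQ, hS]
    field_simp
    ring
  refine ⟨first, ?_⟩
  intro x j k l
  obtain ⟨c, hc⟩ := hXu x
  have hc0 : c ≠ 0 := by
    intro h
    have ht := hXtime x
    simp only [hc, h, zero_mul, mul_zero, Finset.sum_const_zero] at ht
    exact lt_irrefl 0 ht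
  have key : c * (∑ m, ∑ a, ginv x m a * weylPF n g Riem A B u x j k l a * u x m)
      = ∑ m, ∑ a, weylPF n g Riem A B u x j k l a * ginv x a m * X x m := by
    rw [Finset.mul_sum]
    apply Finset.sum_congr rfl; intro m _
    rw [Finset.mul_sum]
    apply Finset.sum_congr rfl; intro a _
    rw [hc m, hginvsymm x a m]
    ring
  rw [first x j k l] at key
  exact (mul_eq_zero.mp key).resolve_left hc0
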